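/- Let P ∈ M_N(ℂ) be a nonzero orthogonal projection, let F_1,…,F_n ∈ M_N(ℂ), let η_1,…,η_n ∈ {+1,−1}, and let d_1,…,d_n ∈ ℝ satisfy the diagonalized quantum error correcting conditions P F_i† F_j P = δ_{ij} d_i P for all i, j. Let ρ ∈ M_N(ℂ) be positive semidefinite. If the negative part of the evolution is nonzero on the encoded state, i.e. Σ_{i : η_i = −1} F_i (P ρ P) F_i† ≠ 0, then the output matrix Σ_{i=1}^n η_i · F_i (P ρ P) F_i† is not positive semidefinite; that is, there exists a vector v ∈ ℂ^N with v† (Σ_i η_i F_i (PρP) F_i†) v < 0. -/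

import Mathlib

open Matrix ComplexOrder

private lemma conj_expect {N : ℕ} (C A : Matrix (Fin N) (Fin N) ℂ) (x : Fin N → ℂ) :
    star (C.mulVec x) ⬝ᵥ A.mulVec (C.mulVec x) = star x ⬝ᵥ (Cᴴ * A * C).mulVec x := by
  simp only [star_mulVec, dotProduct_mulVec, vecMul_vecMul, Matrix.mul_assoc, mulVec_mulVec]

theorem stmt_1 {N n : ℕ} (P : Matrix (Fin N) (Fin N) ℂ)
    (hP : P ≠ 0) (hProj : P * P = P) (hPH : Pᴴ = P)
    (F : Fin n → Matrix (Fin N) (Fin N) ℂ)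
    (η : Fin n → ℝ) (hη : ∀ i, η i = 1 ∨ η i = -1)
    (d : Fin n → ℝ)
    (hQEC : ∀ i j, P * (F i)ᴴ * F j * P = (if i = j then (d i : ℂ) else 0) • P)
    (ρ : Matrix (Fin N) (Fin N) ℂ) (hρ : ρ.PosSemidef)
    (hneg : ∑ i ∈ Finset.univ.filter (fun i => η i = -1),
      F i * (P * ρ * P) * (F i)ᴴ ≠ 0) :
    ∃ v : Fin N → ℂ,
      star v ⬝ᵥ (∑ i, (η i : ℂ) • (F i * (P * ρ * P) * (F i)ᴴ)).mulVec v < 0 := by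
  set σ : Matrix (Fin N) (Fin N) ℂ := P * ρ * P with hσdef
  have h1 : ∃ k ∈ Finset.univ.filter (fun i => η i = -1),
      F k * σ * (F k)ᴴ ≠ 0 := by
    by_contra h
    push_neg at h
    exact hneg (Finset.sum_eq_zero h)
  obtain ⟨k, hkmem, hk0⟩ := h1
  have hηk : η k = -1 := (Finset.mem_filter.mp hkmem).2
  have hσPSD : σ.PosSemidef := by
    have := hρ.conjTranspose_mul_mul_same P
    rwa [hPH] at this
  have hσ0 : σ ≠ 0 := by
    intro h
    apply hk0
    rw [h, Matrix.mul_zero, Matrix.zero_mul]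
  have hdk : (d k : ℂ) ≠ 0 := by
    intro h
    apply hk0
    have hFP : F k * P = 0 := by
      have h2 : (F k * P)ᴴ * (F k * P) = 0 := by
        calc (F k * P)ᴴ * (F k * P) = P * (F k)ᴴ * F k * P := by
              rw [conjTranspose_mul, hPH]; simp only [Matrix.mul_assoc]
          _ = (d k : ℂ) • P := by rw [hQEC k k, if_pos rfl]
          _ = 0 := by rw [h, zero_smul]
      exact conjTranspose_mul_self_eq_zero.mp h2
    have h3 : F k * σ * (F k)ᴴ = (F k * P) * ρ * (P * (F k)ᴴ) := by
      simp only [hσdef, Matrix.mul_assoc]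
    rw [h3, hFP, Matrix.zero_mul, Matrix.zero_mul]
  have hdkR : d k ≠ 0 := fun h => hdk (by exact_mod_cast congrArg (Complex.ofReal) h)
  -- find x with positive expectation on σ
  obtain ⟨B, hB⟩ : ∃ B : Matrix (Fin N) (Fin N) ℂ, σ = Bᴴ * B := by
    open scoped MatrixOrder in
    obtain ⟨B, hB⟩ := CStarAlgebra.nonneg_iff_eq_star_mul_self.mp hσPSD.nonneg
    exact ⟨B, hB⟩
  have hB0 : B ≠ 0 := by
    intro h; apply hσ0; rw [hB, h, Matrix.mul_zero]
  obtain ⟨x, hx⟩ : ∃ x, B.mulVec x ≠ 0 := by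
    by_contra h
    push_neg at h
    apply hB0
    ext i j
    have := congr_fun (h (Pi.single j 1)) i
    simpa using this
  have hσx : star x ⬝ᵥ σ.mulVec x = star (B.mulVec x) ⬝ᵥ (B.mulVec x) := by
    have := conj_expect B 1 x
    simp only [Matrix.one_mulVec, Matrix.mul_one] at this
    rw [hB, this]
  have ht : 0 < star x ⬝ᵥ σ.mulVec x := by
    refine lt_of_le_of_ne (hσPSD.dotProduct_mulVec_nonneg x) (Ne.symm ?_)
    rw [hσx]
    exact fun hz => hx (dotProduct_star_self_eq_zero.mp hz)
  -- key matrix identity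
  have key : ∀ i, (F k * P)ᴴ * (F i * σ * (F i)ᴴ) * (F k * P)
      = (if i = k then ((d k : ℂ))^2 else 0) • σ := by
    intro i
    have e1 : (F k * P)ᴴ * (F i * σ * (F i)ᴴ) * (F k * P)
        = (P * (F k)ᴴ * F i * P) * ρ * (P * (F i)ᴴ * F k * P) := by
      rw [conjTranspose_mul, hPH]
      simp only [hσdef, Matrix.mul_assoc]
    rw [e1, hQEC k i, hQEC i k]
    by_cases h : i = k
    · subst h
      simp only [if_pos rfl, Matrix.smul_mul, Matrix.mul_smul, smul_smul, sq, hσdef,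
        Matrix.mul_assoc]
      norm_num
    · rw [if_neg h, if_neg (fun hh : k = i => h hh.symm), if_neg h, zero_smul,
        Matrix.zero_mul, Matrix.mul_zero, zero_smul]
  -- collapse the sum
  have mkey : (F k * P)ᴴ * (∑ i, (η i : ℂ) • (F i * σ * (F i)ᴴ)) * (F k * P)
      = ((η k : ℂ) * (d k : ℂ)^2) • σ := by
    rw [Finset.mul_sum, Finset.sum_mul]
    calc ∑ i, (F k * P)ᴴ * ((η i : ℂ) • (F i * σ * (F i)ᴴ)) * (F k * P)
        = ∑ i, (η i : ℂ) • ((F k * P)ᴴ * (F i * σ * (F i)ᴴ) * (F k * P)) := by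
          refine Finset.sum_congr rfl fun i _ => ?_
          rw [mul_smul_comm, smul_mul_assoc]
      _ = ∑ i, (η i : ℂ) • ((if i = k then ((d k : ℂ))^2 else 0) • σ) := by
          simp_rw [key]
      _ = ((η k : ℂ) * (d k : ℂ)^2) • σ := by
          rw [Finset.sum_eq_single k]
          · rw [if_pos rfl, smul_smul]
          · intro i _ hik
            rw [if_neg hik, zero_smul, smul_zero]
          · intro h; exact absurd (Finset.mem_univ k) h
  refine ⟨(F k * P).mulVec x, ?_⟩
  rw [conj_expect, mkey, smul_mulVec, dotProduct_smul, smul_eq_mul, hηk]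
  have hp : (0 : ℂ) < (d k : ℂ)^2 := by
    rw [show ((d k : ℂ))^2 = (((d k)^2 : ℝ) : ℂ) by push_cast; ring, Complex.zero_lt_real]
    positivity
  have := mul_pos hp ht
  push_cast
  calc (-1 : ℂ) * ((d k : ℂ)^2) * (star x ⬝ᵥ σ.mulVec x)
      = -((d k : ℂ)^2 * (star x ⬝ᵥ σ.mulVec x)) := by ring
    _ < 0 := neg_neg_iff_pos.mpr this
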